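/- For any sequence of valuations (s_t, b_t) in [0,1]^2 for t = 1,...,T and any positive integer K, we have max_{p ∈ [0,1]} Σ_{t=1}^T GFT_t(p,p) ≤ max_{(p,q) ∈ H_K} Σ_{t=1}^T GFT_t(p,q) + T/K, where H_K = {((i+1)/K, i/K) : i ∈ {0,...,K-1}}. -/

import Mathlib

open Finset

/-- Gain from trade: price `p` posted to the seller (valuation `s`),
price `q` to the buyer (valuation `b`). -/
noncomputable def gft (s b p q : ℝ) : ℝ :=
  (if s ≤ p then (1:ℝ) else 0) * (if q ≤ b then (1:ℝ) else 0) * (b - s)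

lemma gft_point (s b p lo hi : ℝ) (hlo : lo ≤ p) (hhi : p ≤ hi) :
    gft s b p p ≤ gft s b hi lo + (hi - lo) := by
  unfold gft
  split_ifs <;> nlinarith

/-- `max_{p∈[0,1]} Σ_t GFT_t(p,p) ≤ max_{(p,q)∈H_K} Σ_t GFT_t(p,q) + T/K`. -/
theorem stmt_1 (T K : ℕ) (hK : 0 < K) (s b : ℕ → ℝ)
    (hvals : ∀ t, s t ∈ Set.Icc (0:ℝ) 1 ∧ b t ∈ Set.Icc (0:ℝ) 1) :
    ∀ p ∈ Set.Icc (0:ℝ) 1,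
      ∑ t ∈ range T, gft (s t) (b t) p p ≤
        (range K).sup' (nonempty_range_iff.mpr hK.ne')
          (fun i => ∑ t ∈ range T, gft (s t) (b t) (((i:ℝ)+1)/K) ((i:ℝ)/K))
        + (T:ℝ)/K := by
  intro p hp
  obtain ⟨hp0, hp1⟩ := hp
  have hKR : (0:ℝ) < K := by exact_mod_cast hK
  set n : ℕ := (⌊p * K⌋).toNat with hn
  set i : ℕ := min n (K - 1) with hi
  have hiK : i < K := by
    have : K - 1 < K := Nat.sub_lt hK one_pos
    exact lt_of_le_of_lt (min_le_right _ _) this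
  have hnn : (0:ℤ) ≤ ⌊p * K⌋ := Int.le_floor.mpr (by push_cast; positivity)
  have hfloor : (n : ℝ) = (⌊p * K⌋ : ℝ) := by
    rw [hn]; exact_mod_cast Int.toNat_of_nonneg hnn
  have hlo : (i : ℝ) / K ≤ p := by
    have h1 : (i : ℝ) ≤ n := by exact_mod_cast min_le_left n (K-1)
    have h2 : (n : ℝ) ≤ p * K := by rw [hfloor]; exact Int.floor_le _
    rw [div_le_iff₀ hKR]; linarith
  have hhi : p ≤ ((i : ℝ) + 1) / K := by
    rcases le_or_gt n (K - 1) with h | h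
    · have hie : i = n := min_eq_left h
      have h2 : p * K < (n : ℝ) + 1 := by
        rw [hfloor]; exact Int.lt_floor_add_one _
      rw [le_div_iff₀ hKR, hie]; linarith
    · have hie : i = K - 1 := min_eq_right h.le
      have : ((i : ℝ) + 1) / K = 1 := by
        rw [hie]
        have : ((K - 1 : ℕ) : ℝ) = (K : ℝ) - 1 := by
          have : (1:ℕ) ≤ K := hK
          push_cast [Nat.cast_sub this]; ring
        rw [this]; field_simp; ring
      rw [this]; exact hp1
  have hpt : ∀ t ∈ range T,
      gft (s t) (b t) p p ≤ gft (s t) (b t) (((i:ℝ)+1)/K) ((i:ℝ)/K) + 1/K := by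
    intro t _
    have := gft_point (s t) (b t) p ((i:ℝ)/K) (((i:ℝ)+1)/K) hlo hhi
    have hgap : ((i:ℝ)+1)/K - (i:ℝ)/K = 1/K := by field_simp; ring
    linarith [hgap ▸ this]
  calc ∑ t ∈ range T, gft (s t) (b t) p p
      ≤ ∑ t ∈ range T, (gft (s t) (b t) (((i:ℝ)+1)/K) ((i:ℝ)/K) + 1/K) :=
        Finset.sum_le_sum hpt
    _ = (∑ t ∈ range T, gft (s t) (b t) (((i:ℝ)+1)/K) ((i:ℝ)/K)) + (T:ℝ)/K := by
        rw [Finset.sum_add_distrib, Finset.sum_const, card_range]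
        ring
    _ ≤ _ := by
        gcongr
        exact Finset.le_sup' (fun j : ℕ => ∑ t ∈ range T, gft (s t) (b t) (((j:ℝ)+1)/K) ((j:ℝ)/K)) (mem_range.mpr hiK)
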